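/- There exist constants C > 0 and c > 0 such that for every integer m ≥ 3 and every real R > 0 with m·e^{−R} ≤ c, one has | e^{(m−1)R} · (∫₀^R sinh^{m−1}(η) dη) / (∫₀^{2R} sinh^{m−1}(η) dη) − 1 | ≤ C·m·e^{−R}. -/

import Mathlib

open Real intervalIntegral

lemma aux_exp_pow_integral (n : ℕ) (hn : 0 < n) (a b : ℝ) :
    ∫ η in a..b, (Real.exp η / 2) ^ n
      = (Real.exp (n * b) - Real.exp (n * a)) / ((n : ℝ) * 2 ^ n) := by
  have h : ∀ η : ℝ, (Real.exp η / 2) ^ n = ((2:ℝ) ^ n)⁻¹ * Real.exp ((n : ℝ) * η) := by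
    intro η
    rw [div_pow, Real.exp_nat_mul]
    ring
  simp_rw [h]
  rw [intervalIntegral.integral_const_mul]
  have hn' : ((n : ℝ)) ≠ 0 := by positivity
  have := intervalIntegral.integral_comp_mul_left (fun x => Real.exp x) hn' (a := a) (b := b)
  simp only [smul_eq_mul] at this
  rw [this, integral_exp, div_eq_mul_inv, mul_inv]
  ring

lemma aux_sinh_le (η : ℝ) : Real.sinh η ≤ Real.exp η / 2 := by
  rw [Real.sinh_eq]
  have := Real.exp_pos (-η)
  linarith

lemma aux_sinh_ge (s η : ℝ) (hs : s ≤ η) :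
    (1 - Real.exp (-(2 * s))) * (Real.exp η / 2) ≤ Real.sinh η := by
  rw [Real.sinh_eq]
  have h : Real.exp (-η) ≤ Real.exp (-(2 * s)) * Real.exp η := by
    rw [← Real.exp_add]
    exact Real.exp_le_exp.2 (by linarith)
  nlinarith [Real.exp_pos η]

lemma aux_bern (n : ℕ) (t x : ℝ) (ht0 : 0 ≤ t) (ht2 : t ≤ 2) (h : (n : ℝ) * t ≤ x) :
    1 - x ≤ (1 - t) ^ n := by
  have hber := one_add_mul_le_pow (a := -t) (by linarith) n
  have he : ((1 + -t : ℝ)) ^ n = (1 - t) ^ n := by ring_nf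
  nlinarith [hber, he]

lemma aux_vx (v x e1 : ℝ) (hv0 : 0 ≤ v) (h1 : 1 ≤ v * e1) (h2 : 3 * e1 ≤ x) :
    3 ≤ v * x := by
  nlinarith

lemma aux_key1 (x v w β D P Q : ℝ) (hx0 : 0 < x) (hx2 : x ≤ 1/2) (hv1 : 1 < v)
    (hvw : w = v * v) (hvx : 3 ≤ v * x) (hβlo : 1 - x ≤ β) (hD : 0 < D)
    (hQup : Q ≤ (w * w - 1) / D) (hPlo : β * (w - v) / D ≤ P) :
    (1 - 2*x) * Q ≤ w * P := by
  have hv0 : (0:ℝ) < v := by linarith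
  have hwpos : (0:ℝ) < w := by rw [hvw]; positivity
  have h1 : v^2 + v + 1 ≤ x * v^3 := by
    have ha : 3 * v^2 ≤ (v * x) * v^2 := mul_le_mul_of_nonneg_right hvx (by positivity)
    nlinarith [mul_nonneg (by linarith : (0:ℝ) ≤ v - 1) (by linarith : (0:ℝ) ≤ 2*v + 1)]
  have h2 : (1 - 2*x) * (w * w - 1) ≤ β * (w * (w - v)) := by
    have e : w * w - 1 = (v-1) * (v^3 + v^2 + v + 1) := by rw [hvw]; ring
    have e2 : w * (w - v) = (v - 1) * v^3 := by rw [hvw]; ring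
    rw [e, e2]
    have hv10 : (0:ℝ) ≤ v - 1 := by linarith
    have hvcube : (0:ℝ) ≤ (v-1) * v^3 := mul_nonneg hv10 (by positivity)
    have h3 : v^3 + v^2 + v + 1 ≤ (1 + x) * v^3 := by nlinarith
    have h3' : (v-1) * (v^3 + v^2 + v + 1) ≤ (v-1) * ((1+x) * v^3) :=
      mul_le_mul_of_nonneg_left h3 hv10
    have hcx : (1 - 2*x) * (1 + x) ≤ 1 - x := by nlinarith
    calc (1 - 2*x) * ((v-1) * (v^3 + v^2 + v + 1))
        ≤ (1 - 2*x) * ((v-1) * ((1+x) * v^3)) :=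
          mul_le_mul_of_nonneg_left h3' (by linarith)
      _ = ((1 - 2*x) * (1+x)) * ((v-1) * v^3) := by ring
      _ ≤ (1 - x) * ((v-1) * v^3) := mul_le_mul_of_nonneg_right hcx hvcube
      _ ≤ β * ((v - 1) * v^3) := mul_le_mul_of_nonneg_right hβlo hvcube
  calc (1 - 2*x) * Q ≤ (1 - 2*x) * ((w * w - 1) / D) :=
        mul_le_mul_of_nonneg_left hQup (by linarith)
    _ = ((1 - 2*x) * (w * w - 1)) / D := by ring
    _ ≤ (β * (w * (w - v))) / D := (div_le_div_iff_of_pos_right hD).mpr h2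
    _ = w * (β * (w - v) / D) := by ring
    _ ≤ w * P := mul_le_mul_of_nonneg_left hPlo (le_of_lt hwpos)

lemma aux_key2 (x w α D P Q : ℝ) (hx0 : 0 < x) (hx2 : x ≤ 1/2) (hw1 : 1 < w)
    (hαlo : 1 - x * x / 3 ≤ α) (hD : 0 < D)
    (hPup : P ≤ (w - 1) / D) (hQlo : α * (w * (w - 1)) / D ≤ Q) :
    w * P ≤ (1 + 2*x) * Q := by
  have hwpos : (0:ℝ) < w := by linarith
  have hone : 1 ≤ (1 + 2*x) * α := by
    have hmul : (1 + 2*x) * (1 - x * x / 3) ≤ (1 + 2*x) * α :=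
      mul_le_mul_of_nonneg_left hαlo (by linarith)
    nlinarith
  have hww : 0 ≤ w * (w - 1) / D := div_nonneg (by nlinarith) hD.le
  calc w * P ≤ w * ((w - 1) / D) := mul_le_mul_of_nonneg_left hPup (le_of_lt hwpos)
    _ = 1 * (w * (w - 1) / D) := by ring
    _ ≤ ((1 + 2*x) * α) * (w * (w - 1) / D) := mul_le_mul_of_nonneg_right hone hww
    _ = (1 + 2*x) * (α * (w * (w - 1)) / D) := by ring
    _ ≤ (1 + 2*x) * Q := mul_le_mul_of_nonneg_left hQlo (by linarith)

set_option maxHeartbeats 1000000 in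
theorem stmt_3 :
    ∃ C : ℝ, 0 < C ∧ ∃ c : ℝ, 0 < c ∧
      ∀ m : ℕ, 3 ≤ m → ∀ R : ℝ, 0 < R → (m : ℝ) * Real.exp (-R) ≤ c →
        |Real.exp (((m : ℝ) - 1) * R) *
            (∫ η in (0:ℝ)..R, Real.sinh η ^ (m - 1)) /
              (∫ η in (0:ℝ)..(2 * R), Real.sinh η ^ (m - 1)) - 1|
          ≤ C * (m : ℝ) * Real.exp (-R) := by
  refine ⟨2, by norm_num, 1/2, by norm_num, ?_⟩
  intro m hm R hR hc
  set n := m - 1 with hn_def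
  have hmn : ((n : ℝ)) = (m : ℝ) - 1 := by
    have h1 : (1:ℕ) ≤ m := by omega
    rw [hn_def, Nat.cast_sub h1, Nat.cast_one]
  have hn2 : 2 ≤ n := by omega
  have hn0 : 0 < n := by omega
  have hn2' : (2:ℝ) ≤ (n:ℝ) := by exact_mod_cast hn2
  set e1 := Real.exp (-R) with he1
  set x := (m : ℝ) * e1 with hxdef
  have he1pos : 0 < e1 := Real.exp_pos _
  have hm3 : (3 : ℝ) ≤ (m : ℝ) := by exact_mod_cast hm
  have hx0 : 0 < x := by rw [hxdef]; positivity
  have hx2 : x ≤ 1/2 := hc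
  have he1x : 3 * e1 ≤ x := by
    rw [hxdef]; exact mul_le_mul_of_nonneg_right hm3 he1pos.le
  have he16 : e1 ≤ 1/6 := by linarith
  have he1' : e1 < 1 := by linarith
  have hnm : (n : ℝ) ≤ (m : ℝ) := by rw [hmn]; linarith
  -- integrability facts
  have hcont : Continuous fun η : ℝ => Real.sinh η ^ n := Real.continuous_sinh.pow n
  have hi : ∀ a b : ℝ, IntervalIntegrable (fun η : ℝ => Real.sinh η ^ n)
      MeasureTheory.volume a b := fun a b => hcont.intervalIntegrable a b
  have hiE : ∀ a b : ℝ, IntervalIntegrable (fun η : ℝ => (Real.exp η / 2) ^ n)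
      MeasureTheory.volume a b := fun a b =>
    ((Real.continuous_exp.div_const 2).pow n).intervalIntegrable a b
  set P := ∫ η in (0:ℝ)..R, Real.sinh η ^ n with hP
  set Q := ∫ η in (0:ℝ)..(2*R), Real.sinh η ^ n with hQ
  set D : ℝ := (n : ℝ) * 2 ^ n with hD
  have hDpos : 0 < D := by rw [hD]; positivity
  set w := Real.exp ((n : ℝ) * R) with hw
  set v := Real.exp ((n : ℝ) * (R/2)) with hv
  have hvw : w = v * v := by rw [hw, hv, ← Real.exp_add]; ring_nf
  have hw2b : Real.exp ((n:ℝ) * (2*R)) = w * w := by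
    rw [hw, ← Real.exp_add]; ring_nf
  have hw1 : 1 < w := by
    rw [hw]; exact Real.one_lt_exp_iff.mpr (by positivity)
  have hv1 : 1 < v := by
    rw [hv]; exact Real.one_lt_exp_iff.mpr (by positivity)
  -- upper bound for Q
  have hQup : Q ≤ (w * w - 1) / D := by
    have hmono : ∀ η ∈ Set.Icc (0:ℝ) (2*R), Real.sinh η ^ n ≤ (Real.exp η / 2) ^ n :=
      fun η hη => pow_le_pow_left₀ (Real.sinh_nonneg_iff.2 hη.1) (aux_sinh_le η) n
    have h := intervalIntegral.integral_mono_on (by linarith) (hi 0 (2*R)) (hiE 0 (2*R)) hmono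
    rw [aux_exp_pow_integral n hn0 0 (2*R)] at h
    calc Q ≤ (Real.exp ((n:ℝ) * (2*R)) - Real.exp ((n:ℝ) * 0)) / D := h
      _ = (w * w - 1) / D := by rw [mul_zero, Real.exp_zero, hw2b]
  -- lower bound for Q
  set α : ℝ := (1 - e1^2) ^ n with hα
  have he1sq : e1 ^ 2 = Real.exp (-(2*R)) := by
    rw [pow_two, he1, ← Real.exp_add]; ring_nf
  have he1sq1 : e1 ^ 2 < 1 := by
    calc e1 ^ 2 ≤ e1 * 1 := by rw [pow_two]; exact mul_le_mul_of_nonneg_left he1'.le he1pos.le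
      _ < 1 := by linarith
  have hQlo : α * (w * (w - 1)) / D ≤ Q := by
    have hsplit : Q = P + ∫ η in R..(2*R), Real.sinh η ^ n := by
      rw [hP, hQ, intervalIntegral.integral_add_adjacent_intervals (hi 0 R) (hi R (2*R))]
    have hPnn : 0 ≤ P := by
      rw [hP]
      apply intervalIntegral.integral_nonneg (by linarith)
      intro u hu
      exact pow_nonneg (Real.sinh_nonneg_iff.2 hu.1) n
    have hmono : ∀ η ∈ Set.Icc R (2*R),
        ((1 - e1^2) * (Real.exp η / 2)) ^ n ≤ Real.sinh η ^ n := by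
      intro η hη
      apply pow_le_pow_left₀
      · exact mul_nonneg (by linarith) (by positivity)
      · rw [he1sq]; exact aux_sinh_ge R η hη.1
    have h : (∫ η in R..(2*R), ((1 - e1^2) * (Real.exp η / 2)) ^ n)
        ≤ ∫ η in R..(2*R), Real.sinh η ^ n := intervalIntegral.integral_mono_on (by linarith)
      ((((continuous_const.mul (Real.continuous_exp.div_const 2)).pow n).intervalIntegrable) R (2*R))
      (hi R (2*R)) hmono
    have heq : (∫ η in R..(2*R), ((1 - e1^2) * (Real.exp η / 2)) ^ n)
        = α * (w * (w - 1)) / D := by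
      simp_rw [mul_pow]
      rw [intervalIntegral.integral_const_mul, aux_exp_pow_integral n hn0 R (2*R)]
      rw [hw2b, ← hw, ← hD, ← hα]
      ring
    rw [heq] at h
    linarith
  -- upper bound for P
  have hPup : P ≤ (w - 1) / D := by
    have hmono : ∀ η ∈ Set.Icc (0:ℝ) R, Real.sinh η ^ n ≤ (Real.exp η / 2) ^ n :=
      fun η hη => pow_le_pow_left₀ (Real.sinh_nonneg_iff.2 hη.1) (aux_sinh_le η) n
    have h := intervalIntegral.integral_mono_on (by linarith) (hi 0 R) (hiE 0 R) hmono
    rw [aux_exp_pow_integral n hn0 0 R] at h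
    calc P ≤ (Real.exp ((n:ℝ) * R) - Real.exp ((n:ℝ) * 0)) / D := h
      _ = (w - 1) / D := by rw [hw, mul_zero, Real.exp_zero]
  -- lower bound for P
  set β : ℝ := (1 - e1) ^ n with hβ
  have hPlo : β * (w - v) / D ≤ P := by
    have hsplit : P = (∫ η in (0:ℝ)..(R/2), Real.sinh η ^ n)
        + ∫ η in (R/2)..R, Real.sinh η ^ n := by
      rw [hP, intervalIntegral.integral_add_adjacent_intervals (hi 0 (R/2)) (hi (R/2) R)]
    have h0nn : 0 ≤ ∫ η in (0:ℝ)..(R/2), Real.sinh η ^ n := by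
      apply intervalIntegral.integral_nonneg (by linarith)
      intro u hu
      exact pow_nonneg (Real.sinh_nonneg_iff.2 hu.1) n
    have hmono : ∀ η ∈ Set.Icc (R/2) R,
        ((1 - e1) * (Real.exp η / 2)) ^ n ≤ Real.sinh η ^ n := by
      intro η hη
      apply pow_le_pow_left₀
      · exact mul_nonneg (by linarith) (by positivity)
      · have he : e1 = Real.exp (-(2 * (R/2))) := by rw [he1]; ring_nf
        rw [he]; exact aux_sinh_ge (R/2) η hη.1
    have h : (∫ η in (R/2)..R, ((1 - e1) * (Real.exp η / 2)) ^ n)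
        ≤ ∫ η in (R/2)..R, Real.sinh η ^ n := intervalIntegral.integral_mono_on (by linarith)
      ((((continuous_const.mul (Real.continuous_exp.div_const 2)).pow n).intervalIntegrable) (R/2) R)
      (hi (R/2) R) hmono
    have heq : (∫ η in (R/2)..R, ((1 - e1) * (Real.exp η / 2)) ^ n)
        = β * (w - v) / D := by
      simp_rw [mul_pow]
      rw [intervalIntegral.integral_const_mul, aux_exp_pow_integral n hn0 (R/2) R]
      rw [← hw, ← hv, ← hD, ← hβ]
      ring
    rw [heq] at h
    linarith
  -- positivity
  have hαpos : 0 < α := pow_pos (by linarith) n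
  have hβpos : 0 < β := pow_pos (by linarith) n
  have hwv : v < w := by
    have h := mul_lt_mul_of_pos_left hv1 (by linarith : (0:ℝ) < v)
    rw [hvw]; linarith [h]
  have hQpos : 0 < Q := by
    have h0 : 0 < α * (w * (w - 1)) / D :=
      div_pos (mul_pos hαpos (mul_pos (by linarith) (by linarith))) hDpos
    linarith
  clear_value n e1 x P Q D w v α β
  clear hi hiE hcont
  -- Bernoulli bounds
  have hβlo : 1 - x ≤ β := by
    rw [hβ]
    apply aux_bern n e1 x he1pos.le (by linarith)
    calc (n:ℝ) * e1 ≤ (m:ℝ) * e1 := mul_le_mul_of_nonneg_right hnm he1pos.le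
      _ = x := by rw [hxdef]
  have hαlo : 1 - x * x / 3 ≤ α := by
    rw [hα]
    apply aux_bern n (e1^2) (x * x / 3) (by positivity) (by linarith [he1sq1])
    have h1 : (n:ℝ) * e1^2 ≤ (m:ℝ) * e1^2 :=
      mul_le_mul_of_nonneg_right hnm (sq_nonneg e1)
    have h2 : (m:ℝ) * e1^2 = x * e1 := by rw [hxdef]; ring
    have h3 : x * e1 ≤ x * (x/3) := mul_le_mul_of_nonneg_left (by linarith) hx0.le
    linarith
  have hve1 : 1 ≤ v * e1 := by
    rw [hv, he1, ← Real.exp_add]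
    refine Real.one_le_exp ?_
    have h2r : (2:ℝ) * (R/2) ≤ (n:ℝ) * (R/2) :=
      mul_le_mul_of_nonneg_right hn2' (by linarith)
    linarith
  have hvx : 3 ≤ v * x := aux_vx v x e1 (by linarith) hve1 he1x
  -- key inequalities
  have hkey1 : (1 - 2*x) * Q ≤ w * P :=
    aux_key1 x v w β D P Q hx0 hx2 hv1 hvw hvx hβlo hDpos hQup hPlo
  have hkey2 : w * P ≤ (1 + 2*x) * Q :=
    aux_key2 x w α D P Q hx0 hx2 hw1 hαlo hDpos hPup hQlo
  -- conclude
  have hexp : Real.exp (((m : ℝ) - 1) * R) = w := by rw [hw, hmn]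
  have h2x : 2 * (m:ℝ) * e1 = 2 * x := by rw [hxdef]; ring
  rw [hexp, abs_le, h2x]
  constructor
  · have h := (le_div_iff₀ hQpos).mpr hkey1
    linarith
  · have h := (div_le_iff₀ hQpos).mpr hkey2
    linarith
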